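/- arXiv:1703.07102 — 2 statements merged into one kernel-verified Lean document; each statement's English description precedes it below -/
import Mathlib

section
/- Let (p_n) and (q_n) be sequences with 0 < p_n, q_n ≤ 1 such that p_n·q_n → 0 and p_n·q_n²·n/log n → ∞ as n → ∞, and let ρ_n = p_n·q_n²·n/(1 + log n) and r_n = ⌈ρ_n^{−1/3}/p_n⌉. Let (F_n) and (s_n) be sequences of nonnegative reals such that F_n = O(p_n·q_n·n), s_n/q_n → 1 as n → ∞, and F_n·s_n is a nonnegative integer for every n, and let B_n be a Binomial(F_n·s_n, (1−p_n)^{r_n}) random variable. Then for every ε > 0, P(|B_n + F_n·(1−s_n) − F_n·(1−p_n·q_n)^{r_n}| > ε·p_n²·q_n²·n·r_n) = o(p_n²·q_n·r_n/n²) as n → ∞; that is, this probability multiplied by n²/(p_n²·q_n·r_n) tends to 0. -/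
open Filter Finset

/-- The probability that a Binomial(m,t) variable lies in the set A. -/
noncomputable def binomProb (m : ℕ) (t : ℝ) (A : Set ℕ) : ℝ :=
  ∑ k ∈ Finset.range (m + 1),
    Set.indicator A (fun k => (m.choose k : ℝ) * t ^ k * (1 - t) ^ (m - k)) k

/-- ρₙ = pₙ·qₙ²·n/(1 + log n). -/
noncomputable def rhoSeq (p q : ℕ → ℝ) (n : ℕ) : ℝ :=
  p n * (q n) ^ 2 * n / (1 + Real.log n)

/-- rₙ = ⌈ρₙ^(−1/3)/pₙ⌉. -/
noncomputable def rSeq (p q : ℕ → ℝ) (n : ℕ) : ℕ :=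
  ⌈(rhoSeq p q n) ^ (-(1 / 3) : ℝ) / p n⌉₊

lemma binomTerm_nonneg {m : ℕ} {t : ℝ} (ht0 : 0 ≤ t) (ht1 : t ≤ 1) (k : ℕ) :
    0 ≤ (m.choose k : ℝ) * t ^ k * (1 - t) ^ (m - k) :=
  mul_nonneg (mul_nonneg (by positivity) (pow_nonneg ht0 _)) (pow_nonneg (by linarith) _)

lemma binomProb_nonneg {m : ℕ} {t : ℝ} (ht0 : 0 ≤ t) (ht1 : t ≤ 1) (A : Set ℕ) :
    0 ≤ binomProb m t A :=
  Finset.sum_nonneg fun k _ =>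
    Set.indicator_nonneg (fun k _ => binomTerm_nonneg ht0 ht1 k) k

lemma binomProb_mono {m : ℕ} {t : ℝ} (ht0 : 0 ≤ t) (ht1 : t ≤ 1) {A B : Set ℕ}
    (hAB : A ⊆ B) : binomProb m t A ≤ binomProb m t B :=
  Finset.sum_le_sum fun k _ =>
    Set.indicator_le_indicator_of_subset hAB (fun k => binomTerm_nonneg ht0 ht1 k) k

lemma tail_aux (m : ℕ) (t μ c : ℝ) (ht0 : 0 ≤ t) (ht1 : t ≤ 1) :
    binomProb m t {k : ℕ | 0 < μ * ((k : ℝ) - c)} ≤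
      Real.exp (-μ * c) * (1 - t + t * Real.exp μ) ^ m := by
  have key : binomProb m t {k : ℕ | 0 < μ * ((k : ℝ) - c)} ≤
      ∑ k ∈ Finset.range (m + 1),
        (t * Real.exp μ) ^ k * (1 - t) ^ (m - k) * (m.choose k : ℝ) * Real.exp (-μ * c) := by
    apply Finset.sum_le_sum
    intro k _
    by_cases hk : k ∈ {k : ℕ | 0 < μ * ((k : ℝ) - c)}
    · rw [Set.indicator_of_mem hk]
      have h1 : (1:ℝ) ≤ Real.exp μ ^ k * Real.exp (-μ * c) := by
        rw [← Real.exp_nat_mul, ← Real.exp_add]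
        apply Real.one_le_exp
        have : 0 < μ * ((k : ℝ) - c) := hk
        nlinarith
      have h2 : (m.choose k : ℝ) * t ^ k * (1 - t) ^ (m - k) ≤
          ((m.choose k : ℝ) * t ^ k * (1 - t) ^ (m - k)) * (Real.exp μ ^ k * Real.exp (-μ * c)) :=
        le_mul_of_one_le_right (binomTerm_nonneg ht0 ht1 k) h1
      calc (m.choose k : ℝ) * t ^ k * (1 - t) ^ (m - k)
          ≤ ((m.choose k : ℝ) * t ^ k * (1 - t) ^ (m - k)) * (Real.exp μ ^ k * Real.exp (-μ * c)) := h2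
        _ = (t * Real.exp μ) ^ k * (1 - t) ^ (m - k) * (m.choose k : ℝ) * Real.exp (-μ * c) := by
            rw [mul_pow]; ring
    · rw [Set.indicator_of_notMem hk]
      have := binomTerm_nonneg (m := m) ht0 ht1 k
      have h3 : (0:ℝ) ≤ (t * Real.exp μ) ^ k * (1 - t) ^ (m - k) := by
        apply mul_nonneg (pow_nonneg (by positivity) _) (pow_nonneg (by linarith) _)
      positivity
  calc binomProb m t {k : ℕ | 0 < μ * ((k : ℝ) - c)}
      ≤ ∑ k ∈ Finset.range (m + 1),
        (t * Real.exp μ) ^ k * (1 - t) ^ (m - k) * (m.choose k : ℝ) * Real.exp (-μ * c) := key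
    _ = (∑ k ∈ Finset.range (m + 1),
        (t * Real.exp μ) ^ k * (1 - t) ^ (m - k) * (m.choose k : ℝ)) * Real.exp (-μ * c) := by
          rw [← Finset.sum_mul]
    _ = (t * Real.exp μ + (1 - t)) ^ m * Real.exp (-μ * c) := by rw [← add_pow]
    _ = Real.exp (-μ * c) * (1 - t + t * Real.exp μ) ^ m := by ring

lemma bern_low (x : ℝ) (hx : x ≤ 2) (r : ℕ) : 1 - (r:ℝ) * x ≤ (1 - x) ^ r := by
  have := one_add_mul_le_pow (a := -x) (by linarith) r
  calc 1 - (r:ℝ) * x = 1 + (r:ℝ) * (-x) := by ring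
    _ ≤ (1 + (-x)) ^ r := this
    _ = (1 - x) ^ r := by ring_nf

lemma bern_up (x : ℝ) (h0 : 0 ≤ x) (h1 : x ≤ 1) (r : ℕ) :
    (1 - x) ^ r ≤ 1 - (r:ℝ) * x + (r:ℝ) * ((r:ℝ) - 1) / 2 * x ^ 2 := by
  induction r with
  | zero => norm_num
  | succ n ih =>
    have hx1 : (0:ℝ) ≤ 1 - x := by linarith
    have step : (1 - x) ^ (n + 1) ≤ (1 - (n:ℝ) * x + (n:ℝ) * ((n:ℝ) - 1) / 2 * x ^ 2) * (1 - x) := by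
      rw [pow_succ]
      exact mul_le_mul_of_nonneg_right ih hx1
    have hn0 : (0:ℝ) ≤ (n:ℝ) := Nat.cast_nonneg n
    have key : (1 - (n:ℝ) * x + (n:ℝ) * ((n:ℝ) - 1) / 2 * x ^ 2) * (1 - x) ≤
        1 - ((n:ℕ) + 1 : ℝ) * x + ((n:ℝ) + 1) * (((n:ℝ) + 1) - 1) / 2 * x ^ 2 := by
      have hnn1 : (0:ℝ) ≤ (n:ℝ) * ((n:ℝ) - 1) := by
        cases n with
        | zero => norm_num
        | succ k => have : (1:ℝ) ≤ (k+1:ℕ) := by exact_mod_cast Nat.succ_le_succ (Nat.zero_le k)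
                    push_cast at this ⊢; nlinarith
      nlinarith [mul_nonneg hnn1 (pow_nonneg h0 3)]
    push_cast
    push_cast at step key
    linarith

lemma chernoff (m : ℕ) (t lam T : ℝ) (ht0 : 0 ≤ t) (ht1 : t ≤ 1)
    (hl0 : 0 < lam) (hl1 : lam ≤ 1/2) (hT : 0 ≤ T) :
    binomProb m t {k : ℕ | T < |(k : ℝ) - m * t|} ≤
      2 * Real.exp (2 * m * t * lam ^ 2 - lam * T) := by
  have hmt0 : (0:ℝ) ≤ (m : ℝ) * t := by positivity
  -- split into two tails
  have hsplit : binomProb m t {k : ℕ | T < |(k : ℝ) - m * t|} ≤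
      binomProb m t {k : ℕ | 0 < lam * ((k : ℝ) - ((m:ℝ) * t + T))} +
      binomProb m t {k : ℕ | 0 < (-lam) * ((k : ℝ) - ((m:ℝ) * t - T))} := by
    unfold binomProb
    rw [← Finset.sum_add_distrib]
    apply Finset.sum_le_sum
    intro k _
    set f : ℕ → ℝ := fun k => (m.choose k : ℝ) * t ^ k * (1 - t) ^ (m - k) with hf
    have hfk : 0 ≤ f k := binomTerm_nonneg ht0 ht1 k
    by_cases hk : k ∈ {k : ℕ | T < |(k : ℝ) - m * t|}
    · rw [Set.indicator_of_mem hk]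
      have habs : T < |(k : ℝ) - m * t| := hk
      rcases lt_abs.mp habs with h | h
      · have hk1 : k ∈ {k : ℕ | 0 < lam * ((k : ℝ) - ((m:ℝ) * t + T))} := by
          simp only [Set.mem_setOf_eq]; nlinarith
        rw [Set.indicator_of_mem hk1]
        have : 0 ≤ Set.indicator {k : ℕ | 0 < (-lam) * ((k : ℝ) - ((m:ℝ) * t - T))} f k :=
          Set.indicator_nonneg (fun k _ => binomTerm_nonneg ht0 ht1 k) k
        linarith
      · have hk2 : k ∈ {k : ℕ | 0 < (-lam) * ((k : ℝ) - ((m:ℝ) * t - T))} := by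
          simp only [Set.mem_setOf_eq]; nlinarith
        rw [Set.indicator_of_mem hk2]
        have : 0 ≤ Set.indicator {k : ℕ | 0 < lam * ((k : ℝ) - ((m:ℝ) * t + T))} f k :=
          Set.indicator_nonneg (fun k _ => binomTerm_nonneg ht0 ht1 k) k
        linarith
    · rw [Set.indicator_of_notMem hk]
      have h1 : 0 ≤ Set.indicator {k : ℕ | 0 < lam * ((k : ℝ) - ((m:ℝ) * t + T))} f k :=
        Set.indicator_nonneg (fun k _ => binomTerm_nonneg ht0 ht1 k) k
      have h2 : 0 ≤ Set.indicator {k : ℕ | 0 < (-lam) * ((k : ℝ) - ((m:ℝ) * t - T))} f k :=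
        Set.indicator_nonneg (fun k _ => binomTerm_nonneg ht0 ht1 k) k
      linarith
  -- exp bounds
  have hexpl : Real.exp lam ≤ 1 + lam + 2 * lam ^ 2 := by
    have h1 := Real.add_one_le_exp (-lam)
    have h2 : Real.exp (-lam) * Real.exp lam = 1 := by
      rw [← Real.exp_add]; simp
    have h3 : (0:ℝ) < Real.exp lam := Real.exp_pos _
    nlinarith
  have hexpml : Real.exp (-lam) ≤ 1 - lam + 2 * lam ^ 2 := by
    have h1 := Real.add_one_le_exp lam
    have h2 : Real.exp (-lam) * Real.exp lam = 1 := by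
      rw [← Real.exp_add]; simp
    have h3 : (0:ℝ) < Real.exp (-lam) := Real.exp_pos _
    nlinarith
  -- generic: (1 - t + t * exp μ)^m ≤ exp (m * t * (exp μ - 1))
  have hbase : ∀ μ : ℝ, (1 - t + t * Real.exp μ) ^ m ≤ Real.exp ((m:ℝ) * (t * (Real.exp μ - 1))) := by
    intro μ
    have h0 : (0:ℝ) ≤ 1 - t + t * Real.exp μ := by
      have := Real.exp_pos μ
      nlinarith
    have h1 : 1 - t + t * Real.exp μ ≤ Real.exp (t * (Real.exp μ - 1)) := by
      have := Real.add_one_le_exp (t * (Real.exp μ - 1))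
      nlinarith
    calc (1 - t + t * Real.exp μ) ^ m ≤ Real.exp (t * (Real.exp μ - 1)) ^ m :=
          pow_le_pow_left₀ h0 h1 m
      _ = Real.exp ((m:ℝ) * (t * (Real.exp μ - 1))) := (Real.exp_nat_mul _ m).symm
  -- upper tail
  have hup : binomProb m t {k : ℕ | 0 < lam * ((k : ℝ) - ((m:ℝ) * t + T))} ≤
      Real.exp (2 * m * t * lam ^ 2 - lam * T) := by
    calc binomProb m t {k : ℕ | 0 < lam * ((k : ℝ) - ((m:ℝ) * t + T))}
        ≤ Real.exp (-lam * ((m:ℝ) * t + T)) * (1 - t + t * Real.exp lam) ^ m :=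
          tail_aux m t lam _ ht0 ht1
      _ ≤ Real.exp (-lam * ((m:ℝ) * t + T)) * Real.exp ((m:ℝ) * (t * (Real.exp lam - 1))) := by
          apply mul_le_mul_of_nonneg_left (hbase lam) (Real.exp_pos _).le
      _ = Real.exp ((m:ℝ) * (t * (Real.exp lam - 1)) - lam * ((m:ℝ) * t + T)) := by
          rw [← Real.exp_add]; ring_nf
      _ ≤ Real.exp (2 * m * t * lam ^ 2 - lam * T) := by
          apply Real.exp_le_exp.mpr
          have : (m:ℝ) * t * (Real.exp lam - 1 - lam) ≤ (m:ℝ) * t * (2 * lam ^ 2) := by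
            apply mul_le_mul_of_nonneg_left _ hmt0
            nlinarith
          nlinarith
  -- lower tail
  have hlo : binomProb m t {k : ℕ | 0 < (-lam) * ((k : ℝ) - ((m:ℝ) * t - T))} ≤
      Real.exp (2 * m * t * lam ^ 2 - lam * T) := by
    calc binomProb m t {k : ℕ | 0 < (-lam) * ((k : ℝ) - ((m:ℝ) * t - T))}
        ≤ Real.exp (-(-lam) * ((m:ℝ) * t - T)) * (1 - t + t * Real.exp (-lam)) ^ m :=
          tail_aux m t (-lam) _ ht0 ht1
      _ ≤ Real.exp (-(-lam) * ((m:ℝ) * t - T)) * Real.exp ((m:ℝ) * (t * (Real.exp (-lam) - 1))) := by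
          apply mul_le_mul_of_nonneg_left (hbase (-lam)) (Real.exp_pos _).le
      _ = Real.exp ((m:ℝ) * (t * (Real.exp (-lam) - 1)) + lam * ((m:ℝ) * t - T)) := by
          rw [← Real.exp_add]; ring_nf
      _ ≤ Real.exp (2 * m * t * lam ^ 2 - lam * T) := by
          apply Real.exp_le_exp.mpr
          have : (m:ℝ) * t * (Real.exp (-lam) - 1 + lam) ≤ (m:ℝ) * t * (2 * lam ^ 2) := by
            apply mul_le_mul_of_nonneg_left _ hmt0
            nlinarith
          nlinarith
  linarith

set_option maxHeartbeats 1000000 in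
theorem stmt9 (p q : ℕ → ℝ)
    (hp : ∀ n : ℕ, 0 < p n ∧ p n ≤ 1) (hq : ∀ n : ℕ, 0 < q n ∧ q n ≤ 1)
    (hpq0 : Tendsto (fun n : ℕ => p n * q n) atTop (nhds 0))
    (hinf : Tendsto (fun n : ℕ => p n * (q n) ^ 2 * n / Real.log n) atTop atTop)
    (F s : ℕ → ℝ) (hF0 : ∀ n, 0 ≤ F n) (hs0 : ∀ n, 0 ≤ s n)
    (hFO : Asymptotics.IsBigO atTop (fun n : ℕ => F n) (fun n : ℕ => p n * q n * n))
    (hsq : Tendsto (fun n : ℕ => s n / q n) atTop (nhds 1))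
    (m : ℕ → ℕ) (hm : ∀ n : ℕ, (m n : ℝ) = F n * s n)
    (ε : ℝ) (hε : 0 < ε) :
    -- P(|Bₙ + Fₙ(1−sₙ) − Fₙ(1−pₙqₙ)^{rₙ}| > ε·pₙ²qₙ²·n·rₙ) = o(pₙ²qₙrₙ/n²):
    Tendsto (fun n : ℕ =>
        binomProb (m n) ((1 - p n) ^ rSeq p q n)
          {k : ℕ | ε * ((p n) ^ 2 * (q n) ^ 2 * n * (rSeq p q n : ℝ)) <
            |(k : ℝ) + F n * (1 - s n) - F n * (1 - p n * q n) ^ rSeq p q n|}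
        * ((n : ℝ) ^ 2 / ((p n) ^ 2 * q n * (rSeq p q n : ℝ))))
      atTop (nhds 0) := by
  -- Big-O constant
  obtain ⟨C, hC, hCO⟩ := hFO.exists_pos
  have hCbound : ∀ᶠ n in atTop, F n ≤ C * (p n * q n * n) := by
    filter_upwards [hCO.bound] with n hn
    have h1 : 0 ≤ p n * q n * n := by
      have h2 := (hp n).1.le; have h3 := (hq n).1.le; positivity
    rw [Real.norm_eq_abs, Real.norm_eq_abs, abs_of_nonneg (hF0 n), abs_of_nonneg h1] at hn
    exact hn
  -- rho tends to infinity
  have hρinf : Tendsto (rhoSeq p q) atTop atTop := by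
    have h2 : Tendsto (fun n : ℕ => p n * q n ^ 2 * n / Real.log n / 2) atTop atTop :=
      hinf.atTop_div_const (by norm_num)
    apply tendsto_atTop_mono' atTop _ h2
    filter_upwards [eventually_ge_atTop 3] with n hn
    have hN3 : (3:ℝ) ≤ (n:ℝ) := by exact_mod_cast hn
    have hlog1 : 1 ≤ Real.log n := by
      rw [Real.le_log_iff_exp_le (by linarith)]
      calc Real.exp 1 ≤ 2.7182818286 := Real.exp_one_lt_d9.le
        _ ≤ (n:ℝ) := by linarith
    have hX0 : 0 ≤ p n * q n ^ 2 * n := by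
      have h2 := (hp n).1.le; have h3 := (hq n).1.le; positivity
    unfold rhoSeq
    rw [div_div]
    exact div_le_div_of_nonneg_left hX0 (by linarith) (by linarith)
  have hWinf : Tendsto (fun n => (rhoSeq p q n) ^ ((1:ℝ)/3)) atTop atTop :=
    (tendsto_rpow_atTop (by norm_num : (0:ℝ) < 1/3)).comp hρinf
  set K : ℝ := 48/ε + 384*(2*C+1)/ε^2 + 8*C/ε + 1 with hKdef
  have hKa : 0 ≤ 48/ε := by positivity
  have hKb : 0 ≤ 384*(2*C+1)/ε^2 := by positivity
  have hKc : 0 ≤ 8*C/ε := by positivity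
  have hK1 : 1 ≤ K := by rw [hKdef]; linarith
  set δ0 : ℝ := ε/(8*C) with hδ0def
  have hδ0 : 0 < δ0 := by rw [hδ0def]; positivity
  have hsdev : ∀ᶠ n in atTop, |s n / q n - 1| ≤ min δ0 1 := by
    have hball : ∀ᶠ x in nhds (1:ℝ), |x - 1| ≤ min δ0 1 := by
      have hb := Metric.closedBall_mem_nhds (1:ℝ) (lt_min hδ0 one_pos)
      filter_upwards [hb] with x hx
      simpa [Real.dist_eq] using hx
    exact hsq.eventually hball
  -- squeeze
  apply squeeze_zero' (g := fun n : ℕ => (2/Real.exp 6)/(n:ℝ))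
  · apply Eventually.of_forall
    intro n
    have hP0 := (hp n).1; have hP1 := (hp n).2
    have hQ0 := (hq n).1; have hQ1 := (hq n).2
    have ht0 : 0 ≤ (1 - p n) ^ rSeq p q n := pow_nonneg (by linarith) _
    have ht1 : (1 - p n) ^ rSeq p q n ≤ 1 := pow_le_one₀ (by linarith) (by linarith)
    have h1 := binomProb_nonneg (m := m n) ht0 ht1
      {k : ℕ | ε * ((p n) ^ 2 * (q n) ^ 2 * n * (rSeq p q n : ℝ)) <
        |(k : ℝ) + F n * (1 - s n) - F n * (1 - p n * q n) ^ rSeq p q n|}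
    have h2 : 0 ≤ (n : ℝ) ^ 2 / ((p n) ^ 2 * q n * (rSeq p q n : ℝ)) := by positivity
    exact mul_nonneg h1 h2
  · filter_upwards [hWinf.eventually_ge_atTop K, eventually_ge_atTop 3, hCbound, hsdev]
      with n hWK hn3 hFC hsd
    obtain ⟨hP0, hP1⟩ := hp n
    obtain ⟨hQ0, hQ1⟩ := hq n
    set P := p n with hPdef
    set Q := q n with hQdef
    set N := (n:ℝ) with hNdef
    set R := rSeq p q n with hRdef
    set ρ := rhoSeq p q n with hρdef2
    set L : ℝ := 1 + Real.log N with hLdef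
    have hρeq : ρ = P * Q^2 * N / L := rfl
    have hRceil : R = ⌈ρ ^ (-(1/3):ℝ) / P⌉₊ := rfl
    set Wn := ρ ^ ((1:ℝ)/3) with hWdef
    clear_value Wn L ρ R N Q P
    have hN3 : (3:ℝ) ≤ N := by rw [hNdef]; exact_mod_cast hn3
    have hN0 : (0:ℝ) < N := by linarith only [hN3]
    have hlogN : (0:ℝ) ≤ Real.log N := Real.log_nonneg (by linarith only [hN3])
    have hL1 : (1:ℝ) ≤ L := by rw [hLdef]; linarith only [hlogN]
    have hL0 : (0:ℝ) < L := by linarith only [hL1]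
    have hρ0 : (0:ℝ) < ρ := by
      rw [hρeq]
      exact div_pos (by positivity) hL0
    have hW0 : (0:ℝ) < Wn := by rw [hWdef]; exact Real.rpow_pos_of_pos hρ0 _
    have hW1 : (1:ℝ) ≤ Wn := le_trans hK1 hWK
    have hW3 : Wn ^ (3:ℕ) = ρ := by
      rw [hWdef, ← Real.rpow_natCast (ρ ^ ((1:ℝ)/3)) 3, ← Real.rpow_mul hρ0.le]
      norm_num
    have hWinveq : ρ ^ (-(1/3) : ℝ) = Wn⁻¹ := by
      rw [hWdef, Real.rpow_neg hρ0.le]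
    have hWinv0 : 0 ≤ Wn⁻¹ := inv_nonneg.mpr hW0.le
    -- R facts
    have hxpos : 0 < ρ ^ (-(1/3) : ℝ) / P := by
      rw [hWinveq]
      exact div_pos (inv_pos.mpr hW0) hP0
    have hR1 : 1 ≤ R := by rw [hRceil]; exact Nat.one_le_ceil_iff.mpr hxpos
    have hR1' : (1:ℝ) ≤ (R:ℝ) := by exact_mod_cast hR1
    have hR0' : (0:ℝ) < (R:ℝ) := by linarith only [hR1']
    have hPR : Wn⁻¹ ≤ P * R := by
      have h := Nat.le_ceil (ρ ^ (-(1/3) : ℝ) / P)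
      rw [← hRceil, hWinveq] at h
      rw [div_le_iff₀ hP0] at h
      linarith only [h]
    have hPR1 : P * ((R:ℝ) - 1) ≤ Wn⁻¹ := by
      have h := Nat.ceil_lt_add_one hxpos.le
      rw [← hRceil, hWinveq] at h
      have h2 : (R:ℝ) - 1 ≤ Wn⁻¹ / P := by linarith only [h]
      rw [le_div_iff₀ hP0] at h2
      linarith only [h2]
    have hPRm1 : 0 ≤ P * ((R:ℝ) - 1) :=
      mul_nonneg hP0.le (by linarith only [hR1'])
    have hρL : P * Q^2 * N = ρ * L := by
      rw [hρeq, div_mul_cancel₀ _ hL0.ne']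
    have hW1a : (0:ℝ) ≤ Wn^2 - Wn := by
      have h := mul_nonneg (sub_nonneg.mpr hW1) hW0.le
      linarith only [h]
    have hρ1 : (1:ℝ) ≤ ρ := by
      have h2 := mul_nonneg hW1a hW0.le
      linarith only [hW3, hW1, hW1a, h2]
    have hPQ2N1 : 1 ≤ P * Q^2 * N := by
      rw [hρL]
      have h := mul_le_mul hρ1 hL1 zero_le_one (by linarith only [hρ1])
      linarith only [h]
    have hQsq1 : Q^2 ≤ 1 := by nlinarith only [hQ1, hQ0]
    have hPN : 1 ≤ P * N := by
      have h1 : 0 ≤ (P*N) * (1 - Q^2) :=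
        mul_nonneg (mul_nonneg hP0.le hN0.le) (by linarith only [hQsq1])
      linarith only [hPQ2N1, h1]
    have hQN : 1 ≤ Q * N := by
      have a1 : 0 ≤ (1-Q)*(Q*N) :=
        mul_nonneg (by linarith only [hQ1]) (mul_nonneg hQ0.le hN0.le)
      have a2 : 0 ≤ (1-P)*(Q^2*N) :=
        mul_nonneg (by linarith only [hP1]) (mul_nonneg (sq_nonneg Q) hN0.le)
      linarith only [hPQ2N1, a1, a2]
    -- t
    have ht0 : 0 ≤ (1 - P) ^ R := pow_nonneg (by linarith only [hP1]) _
    have ht1 : (1 - P) ^ R ≤ 1 :=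
      pow_le_one₀ (by linarith only [hP1]) (by linarith only [hP0])
    -- s bounds
    have hsmin := abs_le.mp hsd
    have hsUp : s n ≤ Q + Q * min δ0 1 := by
      have h := hsmin.2
      have h2 : s n / Q ≤ 1 + min δ0 1 := by linarith only [h]
      calc s n = (s n / Q) * Q := by field_simp
        _ ≤ (1 + min δ0 1) * Q := mul_le_mul_of_nonneg_right h2 hQ0.le
        _ = Q + Q * min δ0 1 := by ring
    have hsLow : Q - Q * min δ0 1 ≤ s n := by
      have h := hsmin.1
      have h2 : 1 - min δ0 1 ≤ s n / Q := by linarith only [h]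
      calc Q - Q * min δ0 1 = (1 - min δ0 1) * Q := by ring
        _ ≤ (s n / Q) * Q := mul_le_mul_of_nonneg_right h2 hQ0.le
        _ = s n := by field_simp
    have hmin_le_δ : min δ0 1 ≤ δ0 := min_le_left _ _
    have hmin_le_1 : min δ0 1 ≤ 1 := min_le_right _ _
    have hQδm : 0 ≤ Q * (δ0 - min δ0 1) :=
      mul_nonneg hQ0.le (by linarith only [hmin_le_δ])
    have hQ1m : 0 ≤ Q * (1 - min δ0 1) :=
      mul_nonneg hQ0.le (by linarith only [hmin_le_1])
    have hsUpδ : s n ≤ Q + Q * δ0 := by linarith only [hsUp, hQδm]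
    have hsLowδ : Q - Q * δ0 ≤ s n := by linarith only [hsLow, hQδm]
    have hs2Q : s n ≤ 2 * Q := by linarith only [hsUp, hQ1m]
    -- W inverse small
    have hK8 : 8*C/ε ≤ K := by rw [hKdef]; linarith only [hKa, hKb, hKc]
    have hWinv_small : Wn⁻¹ ≤ ε/(8*C) := by
      have h8 : 0 < 8*C/ε := by positivity
      have hle : 8*C/ε ≤ Wn := le_trans hK8 hWK
      calc Wn⁻¹ ≤ (8*C/ε)⁻¹ := inv_anti₀ h8 hle
        _ = ε/(8*C) := by rw [inv_div]
    -- Bernoulli bounds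
    have hPQ0 : 0 ≤ P * Q := mul_nonneg hP0.le hQ0.le
    have hPQ1 : P * Q ≤ 1 := by nlinarith only [hP1, hQ1, hP0, hQ0]
    have bAu : 1 - (1 - P*Q)^R ≤ (R:ℝ) * (P*Q) := by
      have h := bern_low (P*Q) (by linarith only [hPQ1]) R
      linarith only [h]
    have bAl : (R:ℝ) * (P*Q) - (R:ℝ)*((R:ℝ)-1)/2*(P*Q)^2 ≤ 1 - (1 - P*Q)^R := by
      have h := bern_up (P*Q) hPQ0 hPQ1 R
      linarith only [h]
    have bBu : 1 - (1 - P)^R ≤ (R:ℝ) * P := by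
      have h := bern_low P (by linarith only [hP1]) R
      linarith only [h]
    have bBl : (R:ℝ) * P - (R:ℝ)*((R:ℝ)-1)/2*P^2 ≤ 1 - (1 - P)^R := by
      have h := bern_up P hP0.le hP1 R
      linarith only [h]
    -- half-term bounds
    have hPQR0 : 0 ≤ P * Q * (R:ℝ) := mul_nonneg (mul_nonneg hP0.le hQ0.le) hR0'.le
    have e1 : Q * (P * ((R:ℝ)-1)) ≤ Wn⁻¹ := by
      have a : 0 ≤ (1-Q)*(P*((R:ℝ)-1)) := mul_nonneg (by linarith only [hQ1]) hPRm1
      linarith only [a, hPR1]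
    have halfA : (R:ℝ)*((R:ℝ)-1)/2*(P*Q)^2 ≤ (R:ℝ)*P*Q*Wn⁻¹ := by
      have h := mul_le_mul_of_nonneg_left e1 hPQR0
      have hw : 0 ≤ (P*Q*(R:ℝ)) * Wn⁻¹ := mul_nonneg hPQR0 hWinv0
      linarith only [h, hw]
    have halfB : s n * ((R:ℝ)*((R:ℝ)-1)/2*P^2) ≤ (R:ℝ)*P*Q*Wn⁻¹ := by
      have hhalfB0 : 0 ≤ (R:ℝ)*((R:ℝ)-1)/2*P^2 := by
        have h := mul_nonneg (mul_nonneg hR0'.le (by linarith only [hR1'] : (0:ℝ) ≤ (R:ℝ)-1)) (sq_nonneg P)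
        linarith only [h]
      have h1 : s n * ((R:ℝ)*((R:ℝ)-1)/2*P^2) ≤ 2*Q * ((R:ℝ)*((R:ℝ)-1)/2*P^2) :=
        mul_le_mul_of_nonneg_right hs2Q hhalfB0
      have h3 : (P*Q*(R:ℝ)) * (P*((R:ℝ)-1)) ≤ (P*Q*(R:ℝ)) * Wn⁻¹ :=
        mul_le_mul_of_nonneg_left hPR1 hPQR0
      linarith only [h1, h3]
    -- slack bound
    have hsBu : s n * (1 - (1-P)^R) ≤ s n * ((R:ℝ)*P) :=
      mul_le_mul_of_nonneg_left bBu (hs0 n)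
    have hsBl : s n * ((R:ℝ)*P) - s n * ((R:ℝ)*((R:ℝ)-1)/2*P^2) ≤ s n * (1 - (1-P)^R) := by
      have h := mul_le_mul_of_nonneg_left bBl (hs0 n)
      linarith only [h]
    have hRP0 : 0 ≤ (R:ℝ) * P := mul_nonneg hR0'.le hP0.le
    have hsRPu : s n * ((R:ℝ)*P) ≤ (Q + Q*δ0) * ((R:ℝ)*P) :=
      mul_le_mul_of_nonneg_right hsUpδ hRP0
    have hsRPl : (Q - Q*δ0) * ((R:ℝ)*P) ≤ s n * ((R:ℝ)*P) :=
      mul_le_mul_of_nonneg_right hsLowδ hRP0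
    have habs : |(1 - (1 - P*Q)^R) - s n * (1 - (1-P)^R)| ≤ (R:ℝ)*P*Q*(δ0 + Wn⁻¹) := by
      rw [abs_le]
      constructor
      · linarith only [bAl, hsBu, hsRPu, halfA]
      · linarith only [bAu, hsBl, hsRPl, halfB]
    -- deterministic slack
    have hid : (m n:ℝ) * ((1-P)^R) + F n * (1 - s n) - F n * (1 - P*Q)^R =
        F n * ((1 - (1 - P*Q)^R) - s n * (1 - (1-P)^R)) := by
      rw [hm n]; ring
    have hCPQN0 : 0 ≤ C * (P*Q*N) :=
      mul_nonneg hC.le (mul_nonneg (mul_nonneg hP0.le hQ0.le) hN0.le)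
    have hD : |(m n:ℝ) * ((1-P)^R) + F n * (1 - s n) - F n * (1 - P*Q)^R| ≤
        ε * (P^2*Q^2*N*(R:ℝ)) / 2 := by
      rw [hid, abs_mul, abs_of_nonneg (hF0 n)]
      have h1 : F n * |(1 - (1 - P*Q)^R) - s n * (1 - (1-P)^R)| ≤
          (C * (P*Q*N)) * ((R:ℝ)*P*Q*(δ0 + Wn⁻¹)) :=
        mul_le_mul hFC habs (abs_nonneg _) hCPQN0
      have h2 : δ0 + Wn⁻¹ ≤ ε/(4*C) := by
        have h2a : ε/(8*C) + ε/(8*C) = ε/(4*C) := by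
          field_simp
          ring
        rw [hδ0def]
        linarith only [hWinv_small, h2a]
      have h3 : (C * (P*Q*N)) * ((R:ℝ)*P*Q*(δ0 + Wn⁻¹)) ≤
          (C * (P*Q*N)) * ((R:ℝ)*P*Q*(ε/(4*C))) := by
        apply mul_le_mul_of_nonneg_left _ hCPQN0
        exact mul_le_mul_of_nonneg_left h2
          (mul_nonneg (mul_nonneg hR0'.le hP0.le) hQ0.le)
      have h4 : (C * (P*Q*N)) * ((R:ℝ)*P*Q*(ε/(4*C))) = ε * (P^2*Q^2*N*(R:ℝ)) / 4 := by
        field_simp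
      have h5 : 0 ≤ ε * (P^2*Q^2*N*(R:ℝ)) := by positivity
      have h6 := h1.trans (h3.trans (le_of_eq h4))
      linarith only [h6, h5]
    -- set inclusion
    set T0 := ε * (P^2*Q^2*N*(R:ℝ)) with hT0def
    have hT0pos : 0 < T0 := by
      rw [hT0def]
      exact mul_pos hε (mul_pos (mul_pos (mul_pos (pow_pos hP0 2) (pow_pos hQ0 2)) hN0) hR0')
    clear_value T0
    have hsub : {k : ℕ | T0 < |(k : ℝ) + F n * (1 - s n) - F n * (1 - P * Q) ^ R|} ⊆
        {k : ℕ | T0/2 < |(k:ℝ) - (m n : ℝ) * ((1-P)^R)|} := by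
      intro k hk
      simp only [Set.mem_setOf_eq] at hk ⊢
      have htri := abs_sub_abs_le_abs_sub ((k:ℝ) + F n * (1 - s n) - F n * (1 - P*Q)^R)
        ((m n:ℝ) * ((1-P)^R) + F n * (1 - s n) - F n * (1 - P*Q)^R)
      have heq : ((k:ℝ) + F n * (1 - s n) - F n * (1 - P*Q)^R) -
          ((m n:ℝ) * ((1-P)^R) + F n * (1 - s n) - F n * (1 - P*Q)^R) =
          (k:ℝ) - (m n:ℝ) * ((1-P)^R) := by ring
      rw [heq] at htri
      linarith only [htri, hk, hD]
    -- Chernoff parameters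
    set Vb := 2*C*(P*Q^2*N) + 1 with hVbdef
    have hVb0 : 0 < Vb := by
      rw [hVbdef]
      have : 0 ≤ 2*C*(P*Q^2*N) :=
        mul_nonneg (by linarith only [hC]) (mul_nonneg (mul_nonneg hP0.le (sq_nonneg Q)) hN0.le)
      linarith only [this]
    have hmt : (m n:ℝ) * ((1-P)^R) ≤ Vb := by
      have hm0 : (0:ℝ) ≤ (m n:ℝ) := Nat.cast_nonneg _
      have h1 : (m n:ℝ) * ((1-P)^R) ≤ (m n:ℝ) := mul_le_of_le_one_right hm0 ht1
      have h3 : F n * s n ≤ (C*(P*Q*N)) * (2*Q) :=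
        mul_le_mul hFC hs2Q (hs0 n) hCPQN0
      rw [hVbdef]
      linarith only [h1, h3, hm n]
    have hVbB : Vb ≤ (2*C+1)*(ρ*L) := by
      rw [hVbdef, ← hρL]
      linarith only [hPQ2N1]
    clear_value Vb
    set T1 := T0/2 with hT1def
    have hT1pos : 0 < T1 := by rw [hT1def]; linarith only [hT0pos]
    clear_value T1
    -- key lower bounds on T1
    have hρWinv : ρ * Wn⁻¹ = Wn^2 := by
      field_simp
      linarith only [hW3]
    have hρPR : Wn^2 ≤ ρ * (P*(R:ℝ)) := by
      have h := mul_le_mul_of_nonneg_left hPR hρ0.le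
      linarith only [h, hρWinv]
    have hT1eq : T1 = (ε/2) * ((ρ*L) * (P*(R:ℝ))) := by
      rw [hT1def, hT0def, ← hρL]; ring
    have hK48 : 48/ε ≤ K := by rw [hKdef]; linarith only [hKb, hKc]
    have hWbig : 48/ε ≤ Wn := le_trans hK48 hWK
    have hT1a : 24 * L ≤ T1 := by
      rw [hT1eq]
      have h1 : Wn^2 * L ≤ (ρ * (P*(R:ℝ))) * L :=
        mul_le_mul_of_nonneg_right hρPR hL0.le
      have h2 : 48/ε * L ≤ Wn^2 * L := by
        have h2a : 48/ε ≤ Wn^2 := by linarith only [hWbig, hW1a]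
        exact mul_le_mul_of_nonneg_right h2a hL0.le
      have h3 : (ε/2) * (48/ε * L) = 24 * L := by
        field_simp
        ring
      have h4 : (ε/2) * (48/ε * L) ≤ (ε/2) * ((ρ*L) * (P*(R:ℝ))) := by
        apply mul_le_mul_of_nonneg_left _ (by linarith only [hε] : (0:ℝ) ≤ ε/2)
        calc 48/ε * L ≤ Wn^2 * L := h2
          _ ≤ (ρ * (P*(R:ℝ))) * L := h1
          _ = (ρ*L) * (P*(R:ℝ)) := by ring
      linarith only [h3, h4]
    have hK384 : 384*(2*C+1)/ε^2 ≤ K := by rw [hKdef]; linarith only [hKa, hKc]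
    have hW384 : 384*(2*C+1)/ε^2 ≤ Wn := le_trans hK384 hWK
    have hρPR2 : Wn ≤ ρ * (P*(R:ℝ))^2 := by
      have hsq2 : (Wn⁻¹)^2 ≤ (P*(R:ℝ))^2 := pow_le_pow_left₀ hWinv0 hPR 2
      have h1 : ρ * (Wn⁻¹)^2 ≤ ρ * (P*(R:ℝ))^2 :=
        mul_le_mul_of_nonneg_left hsq2 hρ0.le
      have h2 : ρ * (Wn⁻¹)^2 = Wn := by
        field_simp
        linarith only [hW3]
      linarith only [h1, h2]
    have hT1b : 96 * L * Vb ≤ T1^2 := by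
      have h1 : (ε^2/4) * (384*(2*C+1)/ε^2) ≤ (ε^2/4) * (ρ * (P*(R:ℝ))^2) :=
        mul_le_mul_of_nonneg_left (le_trans hW384 hρPR2) (by positivity)
      have h2 : (ε^2/4) * (384*(2*C+1)/ε^2) = 96*(2*C+1) := by
        field_simp
        ring
      have h3 : 96*(2*C+1) ≤ (ε^2/4) * (ρ * (P*(R:ℝ))^2) := by linarith only [h1, h2]
      have hT1sq : T1^2 = ((ε^2/4) * (ρ * (P*(R:ℝ))^2)) * (ρ * L^2) := by
        rw [hT1eq]; ring
      have h4 : 96 * L * Vb ≤ 96 * L * ((2*C+1)*(ρ*L)) :=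
        mul_le_mul_of_nonneg_left hVbB (by linarith only [hL1] : (0:ℝ) ≤ 96 * L)
      have h5 : 96 * L * ((2*C+1)*(ρ*L)) = (96*(2*C+1)) * (ρ * L^2) := by ring
      have hρL2 : 0 ≤ ρ * L^2 := mul_nonneg hρ0.le (sq_nonneg L)
      have h6 : (96*(2*C+1)) * (ρ * L^2) ≤ ((ε^2/4) * (ρ * (P*(R:ℝ))^2)) * (ρ * L^2) :=
        mul_le_mul_of_nonneg_right h3 hρL2
      exact le_trans (le_trans h4 (le_of_eq h5)) (le_trans h6 hT1sq.ge)
    -- choose lambda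
    set lam := min (1/2 : ℝ) (T1/(8*Vb)) with hlamdef
    have h8Vb : (0:ℝ) < 8*Vb := by linarith only [hVb0]
    have hlam0 : 0 < lam := lt_min (by norm_num) (div_pos hT1pos h8Vb)
    have hlam12 : lam ≤ 1/2 := min_le_left _ _
    clear_value lam
    have hexpbound : 2 * (m n:ℝ) * ((1-P)^R) * lam^2 - lam * T1 ≤ -(6*L) := by
      have hEVb : 2 * (m n:ℝ) * ((1-P)^R) * lam^2 ≤ 2 * Vb * lam^2 := by
        have h := mul_le_mul_of_nonneg_right hmt (sq_nonneg lam)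
        linarith only [h]
      rcases le_total (T1/(8*Vb)) (1/2 : ℝ) with hc | hc
      · have hlameq : lam = T1/(8*Vb) := hlamdef.trans (min_eq_right hc)
        have hu : T1 = lam * (8*Vb) := by
          rw [hlameq, div_mul_cancel₀ _ h8Vb.ne']
        have hu2 : lam * T1 = 8*Vb*lam^2 := by rw [hu]; ring
        have hT1sq' : T1^2 = 64*Vb^2*lam^2 := by rw [hu]; ring
        have hdiv : L ≤ Vb*lam^2 := by
          nlinarith only [hT1b, hT1sq', hVb0, hL1]
        linarith only [hEVb, hu2, hdiv]
      · have hlameq : lam = 1/2 := hlamdef.trans (min_eq_left hc)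
        have h4Vb : 4 * Vb ≤ T1 := by
          rw [le_div_iff₀ h8Vb] at hc
          linarith only [hc]
        rw [hlameq] at hEVb ⊢
        linarith only [hEVb, h4Vb, hT1a, hL0]
    -- Chernoff application
    have hcher := chernoff (m n) ((1-P)^R) lam T1 ht0 ht1 hlam0 hlam12 hT1pos.le
    have hmono : binomProb (m n) ((1-P)^R)
        {k : ℕ | T0 < |(k : ℝ) + F n * (1 - s n) - F n * (1 - P * Q) ^ R|} ≤
        binomProb (m n) ((1-P)^R) {k : ℕ | T1 < |(k:ℝ) - (m n : ℝ) * ((1-P)^R)|} := by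
      exact binomProb_mono ht0 ht1 hsub
    have hexpmono : 2 * Real.exp (2 * (m n) * ((1-P)^R) * lam^2 - lam * T1) ≤
        2 * Real.exp (-(6*L)) := by
      have h := Real.exp_le_exp.mpr hexpbound
      linarith only [h]
    have hBbound := le_trans (le_trans hmono hcher) hexpmono
    -- multiplier bound
    have hMult0 : 0 ≤ N^2 / (P^2*Q*(R:ℝ)) := by positivity
    have hMult : N^2 / (P^2*Q*(R:ℝ)) ≤ N^5 := by
      rw [div_le_iff₀ (mul_pos (mul_pos (pow_pos hP0 2) hQ0) hR0')]
      have h1 : (1:ℝ)*1 ≤ (N*P)*(N*P) :=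
        mul_le_mul (by linarith only [hPN] : (1:ℝ) ≤ N*P) (by linarith only [hPN] : (1:ℝ) ≤ N*P) zero_le_one (mul_nonneg hN0.le hP0.le)
      have h1' : 1 ≤ (N*P)^2 := by nlinarith only [h1]
      have h2 : (1:ℝ)*1 ≤ (N*P)^2 * (N*Q) :=
        mul_le_mul h1' (by linarith only [hQN] : (1:ℝ) ≤ N*Q) zero_le_one (sq_nonneg (N*P))
      have h3 : ((1:ℝ)*1)*1 ≤ ((N*P)^2 * (N*Q)) * (R:ℝ) :=
        mul_le_mul h2 hR1' zero_le_one
          (mul_nonneg (sq_nonneg (N*P)) (mul_nonneg hN0.le hQ0.le))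
      have h4 : 1 ≤ (N*P)^2 * (N*Q) * (R:ℝ) := by linarith only [h3]
      have h5 : N^2 * 1 ≤ N^2 * ((N*P)^2 * (N*Q) * (R:ℝ)) :=
        mul_le_mul_of_nonneg_left h4 (sq_nonneg N)
      nlinarith only [h5]
    -- conclude
    have hfinal : binomProb (m n) ((1-P)^R)
        {k : ℕ | T0 < |(k : ℝ) + F n * (1 - s n) - F n * (1 - P * Q) ^ R|} *
        (N^2 / (P^2*Q*(R:ℝ))) ≤ (2 * Real.exp (-(6*L))) * N^5 :=
      mul_le_mul hBbound hMult hMult0 (by positivity)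
    have hexp6 : Real.exp (6*L) = Real.exp 6 * N^6 := by
      rw [show (6:ℝ)*L = 6 + ((6:ℕ):ℝ)*Real.log N from by rw [hLdef]; push_cast; ring,
        Real.exp_add, Real.exp_nat_mul, Real.exp_log hN0]
    have he6 : Real.exp 6 ≠ 0 := (Real.exp_pos 6).ne'
    have hfin2 : (2 * Real.exp (-(6*L))) * N^5 = (2/Real.exp 6)/N := by
      rw [Real.exp_neg, hexp6]
      field_simp
    exact le_trans hfinal (le_of_eq hfin2)
  · exact tendsto_const_div_atTop_nhds_zero_nat _
end

section
/- Let n ≥ 2 be an integer and let 0 < p ≤ 1 and 0 < q ≤ 1. Set D = ⌈14·log n/(p·q)⌉ and let X be a Binomial(D, p) random variable. Then P(X < log n / q) ≤ 2·n^{−4}. -/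
theorem stmt14 (n : ℕ) (hn : 2 ≤ n) (p q : ℝ)
    (hp : 0 < p) (hp1 : p ≤ 1) (hq : 0 < q) (hq1 : q ≤ 1) :
    binomProb ⌈14 * Real.log n / (p * q)⌉₊ p {k : ℕ | (k : ℝ) < Real.log n / q} ≤
      2 / (n : ℝ) ^ 4 := by
  set D := ⌈14 * Real.log n / (p * q)⌉₊ with hDdef
  set a := Real.log n / q with hadef
  have hn1 : (1:ℝ) < n := by exact_mod_cast Nat.lt_of_lt_of_le one_lt_two hn
  have hlog : 0 < Real.log n := Real.log_pos hn1
  have ha : 0 < a := div_pos hlog hq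
  have halog : Real.log n ≤ a := by
    rw [hadef, le_div_iff₀ hq]; nlinarith
  have hD : 14 * a / p ≤ (D : ℝ) := by
    have h1 := Nat.le_ceil (14 * Real.log n / (p * q))
    have h2 : 14 * a / p = 14 * Real.log n / (p * q) := by
      rw [hadef]; field_simp
    rw [h2]; exact h1
  have haD : 14 * a ≤ (D : ℝ) * p := by
    rw [div_le_iff₀ hp] at hD; linarith
  set s := Real.log 14 with hsdef
  have hs : 0 < s := Real.log_pos (by norm_num)
  have hexps : Real.exp s = 14 := Real.exp_log (by norm_num)
  have hs9 : s ≤ 9 := by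
    rw [hsdef, Real.log_le_iff_le_exp (by norm_num)]
    have h1 := Real.add_one_le_exp (4.5 : ℝ)
    have h2 : Real.exp 9 = Real.exp 4.5 * Real.exp 4.5 := by
      rw [← Real.exp_add]; norm_num
    nlinarith
  have h1p : 0 ≤ 1 - p := by linarith
  -- Step 1: bound the indicator sum by the exponentially tilted sum
  have step1 : binomProb D p {k : ℕ | (k : ℝ) < a} ≤
      ∑ k ∈ Finset.range (D + 1), Real.exp (s * (a - k)) *
        ((D.choose k : ℝ) * p ^ k * (1 - p) ^ (D - k)) := by
    unfold binomProb
    apply Finset.sum_le_sum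
    intro k _
    by_cases hk : (k : ℝ) < a
    · rw [Set.indicator_of_mem (show k ∈ {k : ℕ | (k:ℝ) < a} from hk)]
      have h1 : (1:ℝ) ≤ Real.exp (s * (a - k)) :=
        Real.one_le_exp (by nlinarith)
      have hf : (0:ℝ) ≤ (D.choose k : ℝ) * p ^ k * (1 - p) ^ (D - k) := by positivity
      nlinarith
    · rw [Set.indicator_of_notMem (show k ∉ {k : ℕ | (k:ℝ) < a} from hk)]
      positivity
  -- Step 2: evaluate the tilted sum
  have step2 : ∑ k ∈ Finset.range (D + 1), Real.exp (s * (a - k)) *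
        ((D.choose k : ℝ) * p ^ k * (1 - p) ^ (D - k)) =
      Real.exp (s * a) * (p * (14:ℝ)⁻¹ + (1 - p)) ^ D := by
    rw [add_pow, Finset.mul_sum]
    apply Finset.sum_congr rfl
    intro k _
    have he : Real.exp (s * (a - k)) = Real.exp (s * a) * ((14:ℝ)⁻¹) ^ k := by
      rw [mul_sub, Real.exp_sub]
      rw [mul_comm s (k:ℝ), Real.exp_nat_mul, hexps]
      field_simp
      rw [← mul_pow]; norm_num
    rw [he, mul_pow]
    ring
  -- Step 3: bound the base
  have step3 : (p * (14:ℝ)⁻¹ + (1 - p)) ^ D ≤ Real.exp (-(13 / 14 * p) * D) := by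
    have hb : p * (14:ℝ)⁻¹ + (1 - p) ≤ Real.exp (-(13 / 14 * p)) := by
      have := Real.add_one_le_exp (-(13 / 14 * p))
      linarith
    have hb0 : (0:ℝ) ≤ p * (14:ℝ)⁻¹ + (1 - p) := by nlinarith
    calc (p * (14:ℝ)⁻¹ + (1 - p)) ^ D ≤ Real.exp (-(13 / 14 * p)) ^ D :=
          pow_le_pow_left₀ hb0 hb D
      _ = Real.exp (-(13 / 14 * p) * D) := by
          rw [mul_comm (-(13 / 14 * p)) (D:ℝ), Real.exp_nat_mul]
  -- Step 4: combine
  have step4 : Real.exp (s * a) * Real.exp (-(13 / 14 * p) * D) ≤ ((n:ℝ) ^ 4)⁻¹ := by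
    rw [← Real.exp_add]
    have harg : s * a + -(13 / 14 * p) * D ≤ -(4 * Real.log n) := by nlinarith
    calc Real.exp (s * a + -(13 / 14 * p) * D) ≤ Real.exp (-(4 * Real.log n)) :=
          Real.exp_le_exp.mpr harg
      _ = ((n:ℝ) ^ 4)⁻¹ := by
          rw [Real.exp_neg]
          congr 1
          rw [show ((4:ℝ)) = ((4:ℕ):ℝ) by norm_num, Real.exp_nat_mul,
            Real.exp_log (by linarith)]
  have hn0 : (0:ℝ) < (n:ℝ) ^ 4 := by positivity
  have hexpnn : (0:ℝ) ≤ Real.exp (s * a) := (Real.exp_pos _).le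
  calc binomProb D p {k : ℕ | (k : ℝ) < a}
      ≤ Real.exp (s * a) * (p * (14:ℝ)⁻¹ + (1 - p)) ^ D := by rw [← step2]; exact step1
    _ ≤ Real.exp (s * a) * Real.exp (-(13 / 14 * p) * D) :=
        mul_le_mul_of_nonneg_left step3 hexpnn
    _ ≤ ((n:ℝ) ^ 4)⁻¹ := step4
    _ ≤ 2 / (n:ℝ) ^ 4 := by
        have hinv : (0:ℝ) < ((n:ℝ) ^ 4)⁻¹ := inv_pos.mpr hn0
        rw [div_eq_mul_inv]; linarith
end
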